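/- At the interior equilibrium (ρ₁*, ρ₂*) with (ρ₁*)² = (λ₁ − θλ₂)/((θδ−1)a) and (ρ₂*)² = (λ₂ − δλ₁)/((θδ−1)d), the Jacobian of the vector field (λ₁ρ₁ + ρ₁(aρ₁² + bρ₂²), λ₂ρ₂ + ρ₂(cρ₁² + dρ₂²)) has determinant −4(λ₂ − δλ₁)(λ₁ − θλ₂)/(θδ − 1). -/

import Mathlib

lemma det_clm_prod (L : ℝ × ℝ →L[ℝ] ℝ × ℝ) :
    LinearMap.det (L.toLinearMap) =
      (L (1,0)).1 * (L (0,1)).2 - (L (0,1)).1 * (L (1,0)).2 := by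
  rw [← LinearMap.det_toMatrix (Module.Basis.finTwoProd ℝ), Matrix.det_fin_two]
  simp [LinearMap.toMatrix_apply, Module.Basis.finTwoProd]


/-- At the interior equilibrium of the double-Hopf radial vector field
`F(ρ₁,ρ₂) = (λ₁ρ₁ + ρ₁(aρ₁² + bρ₂²), λ₂ρ₂ + ρ₂(cρ₁² + dρ₂²))`, the Jacobian
has determinant `-4(λ₂ - δλ₁)(λ₁ - θλ₂)/(θδ - 1)` where `δ = c/a`, `θ = b/d`. -/
theorem double_hopf_interior_jacobian_det (lam₁ lam₂ a b c d : ℝ)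
    (ha : a ≠ 0) (hd : d ≠ 0)
    (δ θ : ℝ) (hδ : δ = c / a) (hθ : θ = b / d) (hθδ : θ * δ ≠ 1)
    (ρ₁ ρ₂ : ℝ) (hρ₁ : 0 < ρ₁) (hρ₂ : 0 < ρ₂)
    (hρ₁sq : ρ₁ ^ 2 = (lam₁ - θ * lam₂) / ((θ * δ - 1) * a))
    (hρ₂sq : ρ₂ ^ 2 = (lam₂ - δ * lam₁) / ((θ * δ - 1) * d))
    (F : ℝ × ℝ → ℝ × ℝ)
    (hF : F = fun p =>
      (lam₁ * p.1 + p.1 * (a * p.1 ^ 2 + b * p.2 ^ 2),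
       lam₂ * p.2 + p.2 * (c * p.1 ^ 2 + d * p.2 ^ 2))) :
    LinearMap.det ((fderiv ℝ F (ρ₁, ρ₂)).toLinearMap)
      = -4 * (lam₂ - δ * lam₁) * (lam₁ - θ * lam₂) / (θ * δ - 1) := by
  have hsub : θ * δ - 1 ≠ 0 := sub_ne_zero.mpr hθδ
  set x : ℝ × ℝ := (ρ₁, ρ₂)
  have h1 : HasFDerivAt (fun p : ℝ × ℝ => p.1) (ContinuousLinearMap.fst ℝ ℝ ℝ) x := hasFDerivAt_fst
  have h2 : HasFDerivAt (fun p : ℝ × ℝ => p.2) (ContinuousLinearMap.snd ℝ ℝ ℝ) x := hasFDerivAt_snd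
  have hc1 := ((h1.const_mul lam₁).add (h1.mul (((h1.mul h1).const_mul a).add ((h2.mul h2).const_mul b))))
  have hc2 := ((h2.const_mul lam₂).add (h2.mul (((h1.mul h1).const_mul c).add ((h2.mul h2).const_mul d))))
  have hFG : F = fun p : ℝ × ℝ =>
      (lam₁ * p.1 + p.1 * (a * (p.1 * p.1) + b * (p.2 * p.2)),
       lam₂ * p.2 + p.2 * (c * (p.1 * p.1) + d * (p.2 * p.2))) := by
    rw [hF]; funext p; simp only [pow_two]
  rw [hFG, (show HasFDerivAt (fun p : ℝ × ℝ =>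
      (lam₁ * p.1 + p.1 * (a * (p.1 * p.1) + b * (p.2 * p.2)),
       lam₂ * p.2 + p.2 * (c * (p.1 * p.1) + d * (p.2 * p.2)))) _ x from hc1.prodMk hc2).fderiv, det_clm_prod]
  simp only [ContinuousLinearMap.add_apply, ContinuousLinearMap.prod_apply,
    ContinuousLinearMap.smul_apply, ContinuousLinearMap.coe_fst',
    ContinuousLinearMap.coe_snd', ContinuousLinearMap.smulRight_apply,
    ContinuousLinearMap.coe_smul', Pi.smul_apply, smul_eq_mul, Pi.add_apply, Pi.mul_apply, x]
  have hb : b = θ * d := by rw [hθ]; field_simp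
  have hc : c = δ * a := by rw [hδ]; field_simp
  have e1 : (θ * δ - 1) * a * (ρ₁ * ρ₁) = lam₁ - θ * lam₂ := by
    rw [← pow_two, hρ₁sq]; field_simp
  have e2 : (θ * δ - 1) * d * (ρ₂ * ρ₂) = lam₂ - δ * lam₁ := by
    rw [← pow_two, hρ₂sq]; field_simp
  have hl1 : lam₁ = -(a * (ρ₁ * ρ₁) + b * (ρ₂ * ρ₂)) := by
    apply mul_left_cancel₀ hsub
    linear_combination e1 + θ * e2 + ((θ * δ - 1) * (ρ₂ * ρ₂)) * hb
  have hl2 : lam₂ = -(c * (ρ₁ * ρ₁) + d * (ρ₂ * ρ₂)) := by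
    apply mul_left_cancel₀ hsub
    linear_combination e2 + δ * e1 + ((θ * δ - 1) * (ρ₁ * ρ₁)) * hc
  subst hb hc hl1 hl2
  field_simp
  ring
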